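/- Cauchy integral representation of divided differences: for f holomorphic on an open set containing the closed disc of radius R, and points λ_0, …, λ_k inside the disc of radius R that are pairwise distinct, (1/(2πi)) ∮_{|z|=R} f(z)/((z−λ_0)⋯(z−λ_k)) dz = Σ_{j=0}^{k} f(λ_j)/Π_{l≠j}(λ_j − λ_l), i.e. the contour integral equals the k-th divided difference f[λ_0,…,λ_k]. -/

import Mathlib

open Complex Real

open Finset in
lemma circleIntegral_finset_sum {ι : Type*} (t : Finset ι) (g : ι → ℂ → ℂ) (c : ℂ) (R : ℝ)
    (h : ∀ i ∈ t, CircleIntegrable (g i) c R) :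
    (∮ z in C(c, R), ∑ i ∈ t, g i z) = ∑ i ∈ t, ∮ z in C(c, R), g i z := by
  simp only [circleIntegral, smul_sum]
  exact intervalIntegral.integral_finset_sum fun i hi => (h i hi).out

open Finset in
lemma partial_fractions (k : ℕ) (l : Fin (k + 1) → ℂ) (hl : Function.Injective l) (z : ℂ)
    (hz : ∀ j, z ≠ l j) :
    (∏ j : Fin (k + 1), (z - l j))⁻¹ =
      ∑ j : Fin (k + 1), (∏ m ∈ univ.erase j, (l j - l m))⁻¹ * (z - l j)⁻¹ := by
  have hzl : ∀ j, z - l j ≠ 0 := fun j => sub_ne_zero.2 (hz j)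
  have h1 := congrArg (Polynomial.eval z)
    (Lagrange.sum_basis (s := (univ : Finset (Fin (k + 1)))) (v := l) hl.injOn univ_nonempty)
  simp only [Polynomial.eval_finset_sum, Lagrange.basis, Polynomial.eval_prod,
    Lagrange.basisDivisor, Polynomial.eval_mul, Polynomial.eval_C, Polynomial.eval_sub,
    Polynomial.eval_X, Polynomial.eval_one] at h1
  have key : ∀ j : Fin (k + 1),
      ∏ m ∈ univ.erase j, ((l j - l m)⁻¹ * (z - l m)) =
        (∏ m ∈ univ.erase j, (l j - l m))⁻¹ * ((z - l j)⁻¹ * ∏ m : Fin (k + 1), (z - l m)) := by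
    intro j
    rw [prod_mul_distrib, prod_inv_distrib]
    congr 1
    rw [inv_mul_eq_div, eq_div_iff (hzl j), mul_comm]
    exact mul_prod_erase univ (fun m => z - l m) (mem_univ j)
  symm
  apply eq_inv_of_mul_eq_one_left
  rw [Finset.sum_mul]
  have h2 : ∑ j : Fin (k + 1),
      (∏ m ∈ univ.erase j, (l j - l m))⁻¹ * (z - l j)⁻¹ * ∏ m : Fin (k + 1), (z - l m) =
      ∑ j : Fin (k + 1), ∏ m ∈ univ.erase j, ((l j - l m)⁻¹ * (z - l m)) :=
    Finset.sum_congr rfl fun j _ => by rw [key j]; ring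
  rw [h2]; exact h1

theorem stmt11 (f : ℂ → ℂ) (R : ℝ) (s : Set ℂ) (hs : IsOpen s)
    (hball : Metric.closedBall (0 : ℂ) R ⊆ s) (hf : DifferentiableOn ℂ f s)
    (k : ℕ) (l : Fin (k + 1) → ℂ) (hl : Function.Injective l)
    (hlR : ∀ j, ‖l j‖ < R) :
    (2 * π * I)⁻¹ * (∮ z in C(0, R), f z / ∏ j : Fin (k + 1), (z - l j)) =
      ∑ j : Fin (k + 1), f (l j) / ∏ m ∈ Finset.univ.erase j, (l j - l m) := by
  have hR0 : 0 < R := lt_of_le_of_lt (norm_nonneg _) (hlR 0)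
  have hfd : DifferentiableOn ℂ f (Metric.closedBall 0 R) := hf.mono hball
  have hcont : ContinuousOn f (Metric.sphere (0 : ℂ) R) :=
    hfd.continuousOn.mono Metric.sphere_subset_closedBall
  have hsph : ∀ z ∈ Metric.sphere (0 : ℂ) R, ∀ j, z ≠ l j := by
    intro z hz j h
    rw [mem_sphere_zero_iff_norm, h] at hz
    exact (hlR j).ne hz
  set c : Fin (k + 1) → ℂ := fun j => (∏ m ∈ Finset.univ.erase j, (l j - l m))⁻¹ with hc
  have step1 : (∮ z in C(0, R), f z / ∏ j : Fin (k + 1), (z - l j)) =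
      ∮ z in C(0, R), ∑ j : Fin (k + 1), c j • ((z - l j)⁻¹ • f z) := by
    refine circleIntegral.integral_congr hR0.le fun z hz => ?_
    rw [div_eq_mul_inv, partial_fractions k l hl z (hsph z hz), Finset.mul_sum]
    exact Finset.sum_congr rfl fun j _ => by simp [smul_eq_mul]; ring
  have hint : ∀ j : Fin (k + 1),
      CircleIntegrable (fun z => c j • ((z - l j)⁻¹ • f z)) 0 R := by
    intro j
    refine ContinuousOn.circleIntegrable hR0.le ?_
    exact (continuousOn_const (c := c j)).smul
      (((continuousOn_id.sub continuousOn_const).inv₀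
        fun z hz => sub_ne_zero.2 (hsph z hz j)).smul hcont)
  have step2 : (∮ z in C(0, R), ∑ j : Fin (k + 1), c j • ((z - l j)⁻¹ • f z)) =
      ∑ j : Fin (k + 1), c j • ∮ z in C(0, R), (z - l j)⁻¹ • f z := by
    rw [circleIntegral_finset_sum _ _ _ _ fun j _ => hint j]
    exact Finset.sum_congr rfl fun j _ => circleIntegral.integral_smul (c j) _ _ _
  have step3 : ∀ j : Fin (k + 1),
      (∮ z in C(0, R), (z - l j)⁻¹ • f z) = (2 * π * I : ℂ) • f (l j) := fun j =>
    hfd.circleIntegral_sub_inv_smul (by simpa [mem_ball_zero_iff] using hlR j)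
  have h2 : (2 * π * I : ℂ) ≠ 0 := two_pi_I_ne_zero
  rw [step1, step2, Finset.mul_sum]
  refine Finset.sum_congr rfl fun j _ => ?_
  rw [step3 j, smul_eq_mul, smul_eq_mul, div_eq_mul_inv, hc,
    show (2 * π * I : ℂ)⁻¹ * ((∏ m ∈ Finset.univ.erase j, (l j - l m))⁻¹ *
        (2 * π * I * f (l j))) =
      ((2 * π * I : ℂ)⁻¹ * (2 * π * I)) *
        (f (l j) * (∏ m ∈ Finset.univ.erase j, (l j - l m))⁻¹) from by ring,
    inv_mul_cancel₀ h2, one_mul]
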